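/- For all n ≥ 3 and k ≥ 1, the multigraph C_n^k is DP-(2k+1)-critical: χ_DP(C_n^k) = 2k+1, and every proper sub-multigraph of C_n^k has DP-chromatic number less than 2k+1. -/

import Mathlib

open scoped Classical

/-- A multigraph on vertex type `V`: a symmetric edge-multiplicity function with no loops. -/
structure Multigraph (V : Type) where
  e : V → V → ℕ
  symm : ∀ u v, e u v = e v u
  loopless : ∀ v, e v v = 0

namespace Multigraph

variable {V : Type}

/-- `u` and `v` are adjacent if they are distinct and joined by at least one edge. -/
def Adj (G : Multigraph V) (u v : V) : Prop := u ≠ v ∧ 1 ≤ G.e u v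

/-- The underlying simple graph of a multigraph. -/
def toSimpleGraph (G : Multigraph V) : SimpleGraph V where
  Adj := G.Adj
  symm := ⟨fun u v h => ⟨Ne.symm h.1, by rw [G.symm]; exact h.2⟩⟩
  loopless := ⟨fun v h => h.1 rfl⟩

/-- The degree of a vertex: the sum of edge multiplicities at it. -/
def deg [Fintype V] (G : Multigraph V) (v : V) : ℕ := ∑ u, G.e v u

/-- The induced sub-multigraph on a set of vertices. -/
def induce (G : Multigraph V) (B : Set V) : Multigraph B where
  e u v := G.e u v
  symm u v := G.symm u v
  loopless v := G.loopless v

/-- A cover `(L, H)` of a multigraph `G`: pairwise disjoint lists `L v` of colors and a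
graph `H` on the union of the lists (given by its adjacency relation `HAdj`), such that each
`L v` spans a clique, every edge of `H` joins colors of a single list or colors of lists of
adjacent vertices, and each color of `L u` has at most `e_G(u,v)` neighbors in `L v`. -/
structure Cover (G : Multigraph V) (C : Type) where
  L : V → Finset C
  HAdj : C → C → Prop
  Hsymm : ∀ x y, HAdj x y → HAdj y x
  Hirrefl : ∀ x, ¬ HAdj x x
  disjoint : ∀ u v, u ≠ v → Disjoint (L u) (L v)
  cliques : ∀ v, ∀ x ∈ L v, ∀ y ∈ L v, x ≠ y → HAdj x y
  edges_within : ∀ x y, HAdj x y → ∃ u v, x ∈ L u ∧ y ∈ L v ∧ (u = v ∨ G.Adj u v)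
  matching : ∀ u v, u ≠ v → ∀ x ∈ L u, ((L v).filter fun y => HAdj x y).card ≤ G.e u v

/-- An `(L,H)`-coloring: an independent set of `H` meeting every list in exactly one color. -/
def Cover.IsColoring {G : Multigraph V} {C : Type} (cov : Cover G C) (I : Finset C) : Prop :=
  (∀ x ∈ I, ∃ v, x ∈ cov.L v) ∧
  (∀ x ∈ I, ∀ y ∈ I, ¬ cov.HAdj x y) ∧
  (∀ v, (I ∩ cov.L v).card = 1)

/-- `G` is `(L,H)`-colorable if an `(L,H)`-coloring exists. -/
def Cover.Colorable {G : Multigraph V} {C : Type} (cov : Cover G C) : Prop :=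
  ∃ I, cov.IsColoring I

/-- `G` is DP-degree-colorable if it is `(L,H)`-colorable whenever `|L v| ≥ deg v` for all `v`. -/
def DPDegreeColorable [Fintype V] (G : Multigraph V) : Prop :=
  ∀ (C : Type) (cov : Cover G C), (∀ v, G.deg v ≤ (cov.L v).card) → cov.Colorable

/-- The DP-chromatic number: the least `k` such that `G` is `(L,H)`-colorable for every cover
with all lists of size at least `k`. -/
noncomputable def DPChromatic [Fintype V] (G : Multigraph V) : ℕ :=
  sInf {k | ∀ (C : Type) (cov : Cover G C), (∀ v, k ≤ (cov.L v).card) → cov.Colorable}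

/-- The sub-multigraph of `G` on vertex set `A` with multiplicities `e' ≤ e_G`. -/
def subMG (G : Multigraph V) (A : Finset V) (e' : V → V → ℕ)
    (hsymm : ∀ u v, e' u v = e' v u) (hle : ∀ u v, e' u v ≤ G.e u v) :
    Multigraph {x // x ∈ A} where
  e u v := e' u v
  symm u v := hsymm u v
  loopless v := Nat.le_zero.mp (le_of_le_of_eq (hle v v) (G.loopless v))

/-- `G` is DP-`k`-critical: `χ_DP(G) = k` and every proper sub-multigraph (obtained by deleting
vertices and/or decreasing edge multiplicities) has smaller DP-chromatic number. -/
def DPCritical [Fintype V] (G : Multigraph V) (k : ℕ) : Prop :=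
  DPChromatic G = k ∧
  ∀ (A : Finset V) (e' : V → V → ℕ) (hsymm : ∀ u v, e' u v = e' v u)
    (hle : ∀ u v, e' u v ≤ G.e u v),
    (∀ u v, e' u v ≠ 0 → u ∈ A ∧ v ∈ A) →
    ¬(A = Finset.univ ∧ e' = G.e) →
    DPChromatic (subMG G A e' hsymm hle) < k

/-- `G[B]` is connected and has no cut vertex. -/
def Nonseparable (G : Multigraph V) (B : Set V) : Prop :=
  B.Nonempty ∧ (G.induce B).toSimpleGraph.Connected ∧
    ∀ v ∈ B, (G.induce (B \ {v})).toSimpleGraph.Preconnected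

/-- A block of `G`: a maximal vertex set inducing a connected sub-multigraph with no cut vertex. -/
def IsBlock (G : Multigraph V) (B : Set V) : Prop :=
  Nonseparable G B ∧ ∀ B', B ⊆ B' → Nonseparable G B' → B' = B

/-- `G` is 2-connected: connected, at least two vertices, and deleting any one vertex leaves
it connected. -/
def TwoConnected [Fintype V] (G : Multigraph V) : Prop :=
  G.toSimpleGraph.Connected ∧ 2 ≤ Fintype.card V ∧
    ∀ v : V, (G.induce ({v}ᶜ : Set V)).toSimpleGraph.Connected

end Multigraph

/-- A simple graph is a cycle iff it is connected and every vertex has exactly two neighbors. -/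
def IsCycleGraph {α : Type} (S : SimpleGraph α) : Prop :=
  S.Connected ∧ ∀ v, {u | S.Adj v u}.ncard = 2

/-- The multigraph `K_n^k`: `n` vertices, every two distinct vertices joined by `k` edges. -/
def KMG (n k : ℕ) : Multigraph (Fin n) where
  e u v := if u = v then 0 else k
  symm u v := by by_cases h : u = v <;> simp [h, eq_comm]
  loopless v := by simp

/-- The multigraph `C_n^k`: the `n`-cycle with every edge of multiplicity `k`. -/
def CMG (n k : ℕ) : Multigraph (Fin n) where
  e u v := if u ≠ v ∧ ((u.val + 1) % n = v.val ∨ (v.val + 1) % n = u.val) then k else 0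
  symm u v := by
    apply if_congr _ rfl rfl
    constructor
    · rintro ⟨h1, h2⟩; exact ⟨h1.symm, h2.symm⟩
    · rintro ⟨h1, h2⟩; exact ⟨h1.symm, h2.symm⟩
  loopless v := by simp

open Finset in
lemma Multigraph.greedy {V C : Type} [Fintype V] {G : Multigraph V} (cov : G.Cover C)
    (r : V → ℕ) (hr : Function.Injective r)
    (h : ∀ v, ∑ u ∈ Finset.univ.filter (fun u => r u < r v), G.e v u < (cov.L v).card) :
    cov.Colorable := by
  classical
  suffices H : ∀ (S : Finset V), ∃ I : Finset C,
      (∀ x ∈ I, ∃ v ∈ S, x ∈ cov.L v) ∧ (∀ x ∈ I, ∀ y ∈ I, ¬ cov.HAdj x y) ∧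
      (∀ v ∈ S, (I ∩ cov.L v).card = 1) by
    obtain ⟨I, h1, h2, h3⟩ := H Finset.univ
    exact ⟨I, fun x hx => (h1 x hx).imp (fun v hv => hv.2), h2, fun v => h3 v (mem_univ v)⟩
  intro S
  induction S using Finset.strongInduction with
  | _ S ih =>
    rcases S.eq_empty_or_nonempty with rfl | hS
    · exact ⟨∅, by simp, by simp, by simp⟩
    obtain ⟨v, hvS, hvmax⟩ := S.exists_max_image r hS
    obtain ⟨I, h1, h2, h3⟩ := ih (S.erase v) (Finset.erase_ssubset hvS)
    set F := (cov.L v).filter (fun x => ∃ y ∈ I, cov.HAdj x y) with hF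
    have hFcard : F.card < (cov.L v).card := by
      have hsub : F ⊆ (S.erase v).biUnion
          (fun u => (cov.L v).filter (fun x => ∃ y ∈ I ∩ cov.L u, cov.HAdj x y)) := by
        intro x hx
        rw [hF, mem_filter] at hx
        obtain ⟨y, hyI, hxy⟩ := hx.2
        obtain ⟨u, huS, hyL⟩ := h1 y hyI
        exact Finset.mem_biUnion.mpr ⟨u, huS,
          mem_filter.mpr ⟨hx.1, y, Finset.mem_inter.mpr ⟨hyI, hyL⟩, hxy⟩⟩
      have hb : ∀ u ∈ S.erase v,
          ((cov.L v).filter (fun x => ∃ y ∈ I ∩ cov.L u, cov.HAdj x y)).card ≤ G.e v u := by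
        intro u huS
        obtain ⟨y0, hy0⟩ := Finset.card_eq_one.mp (h3 u huS)
        have hy0L : y0 ∈ cov.L u := (Finset.mem_inter.mp (hy0 ▸ Finset.mem_singleton_self y0)).2
        have huv : u ≠ v := Finset.ne_of_mem_erase huS
        have hm := cov.matching u v huv y0 hy0L
        rw [G.symm]
        refine le_trans (Finset.card_le_card ?_) hm
        intro x hx
        rw [mem_filter] at hx ⊢
        obtain ⟨y, hy, hxy⟩ := hx.2
        rw [hy0, Finset.mem_singleton] at hy
        exact ⟨hx.1, cov.Hsymm _ _ (hy ▸ hxy)⟩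
      calc F.card ≤ ∑ u ∈ S.erase v,
            ((cov.L v).filter (fun x => ∃ y ∈ I ∩ cov.L u, cov.HAdj x y)).card :=
          le_trans (card_le_card hsub) card_biUnion_le
        _ ≤ ∑ u ∈ S.erase v, G.e v u := Finset.sum_le_sum hb
        _ ≤ ∑ u ∈ Finset.univ.filter (fun u => r u < r v), G.e v u := by
            refine Finset.sum_le_sum_of_subset ?_
            intro u huS
            rw [mem_filter]
            refine ⟨mem_univ u, ?_⟩
            have h1 := hvmax u (Finset.mem_of_mem_erase huS)
            have h2 : u ≠ v := Finset.ne_of_mem_erase huS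
            exact lt_of_le_of_ne h1 (fun he => h2 (hr he))
        _ < (cov.L v).card := h v
    have hx : ∃ x ∈ cov.L v, x ∉ F := by
      by_contra hc
      push_neg at hc
      exact absurd (Finset.card_le_card hc) (not_le.mpr hFcard)
    obtain ⟨x, hxLv, hxF⟩ := hx
    have hxI : ∀ y ∈ I, ¬ cov.HAdj x y := by
      intro y hy hxy
      exact hxF (mem_filter.mpr ⟨hxLv, y, hy, hxy⟩)
    refine ⟨insert x I, ?_, ?_, ?_⟩
    · intro z hz
      rcases Finset.mem_insert.mp hz with rfl | hz
      · exact ⟨v, hvS, hxLv⟩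
      · obtain ⟨u, hu, hzL⟩ := h1 z hz
        exact ⟨u, Finset.mem_of_mem_erase hu, hzL⟩
    · intro a ha b hb
      rcases Finset.mem_insert.mp ha with ha' | ha' <;>
        rcases Finset.mem_insert.mp hb with hb' | hb'
      · subst ha'; subst hb'; exact cov.Hirrefl _
      · exact ha' ▸ hxI b hb'
      · exact fun hadj => hxI a ha' (cov.Hsymm _ _ (hb' ▸ hadj))
      · exact h2 a ha' b hb'
    · intro u huS
      have hIv : ∀ w, w ∉ S.erase v → I ∩ cov.L w = ∅ := by
        intro w hw
        rw [Finset.eq_empty_iff_forall_notMem]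
        intro y hy
        rw [Finset.mem_inter] at hy
        obtain ⟨u', hu', hyL⟩ := h1 y hy.1
        rcases eq_or_ne u' w with rfl | hne
        · exact hw hu'
        · exact (Finset.disjoint_left.mp (cov.disjoint u' w hne) hyL) hy.2
      rcases eq_or_ne u v with rfl | huv
      · rw [Finset.insert_inter_of_mem hxLv, hIv u (Finset.notMem_erase u S)]
        simp
      · have hxLu : x ∉ cov.L u :=
          Finset.disjoint_left.mp (cov.disjoint v u (Ne.symm huv)) hxLv
        rw [Finset.insert_inter_of_notMem hxLu]
        exact h3 u (Finset.mem_erase.mpr ⟨huv, huS⟩)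

lemma mod_pred_char {n a b : ℕ} (hn : 1 ≤ n) (ha : a < n) (hb : b < n)
    (h : (a + 1) % n = b) : a = (b + (n - 1)) % n := by
  rcases Nat.lt_or_ge (a + 1) n with h1 | h1
  · rw [Nat.mod_eq_of_lt h1] at h
    subst h
    have he : a + 1 + (n - 1) = a + n := by omega
    rw [he, Nat.add_mod_right, Nat.mod_eq_of_lt ha]
  · have hae : a + 1 = n := by omega
    have hb0 : b = 0 := by rw [hae, Nat.mod_self] at h; omega
    subst hb0
    rw [Nat.zero_add, Nat.mod_eq_of_lt (by omega)]
    omega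

lemma CMG_e_le {n k : ℕ} (u v : Fin n) : (CMG n k).e u v ≤ k := by
  show (if _ then k else 0) ≤ k
  split <;> omega

lemma CMG_support {n k : ℕ} (hn : 3 ≤ n) {v u : Fin n} (h : (CMG n k).e v u ≠ 0) :
    u = (⟨(v.val + 1) % n, Nat.mod_lt _ (by omega)⟩ : Fin n) ∨
    u = (⟨(v.val + (n - 1)) % n, Nat.mod_lt _ (by omega)⟩ : Fin n) := by
  have h' : v ≠ u ∧ ((v.val + 1) % n = u.val ∨ (u.val + 1) % n = v.val) := by
    by_contra hc
    exact h (if_neg hc)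
  rcases h'.2 with hc | hc
  · exact Or.inl (Fin.ext hc.symm)
  · exact Or.inr (Fin.ext (mod_pred_char (by omega) u.isLt v.isLt hc))

lemma sum_ite_coe_le {n : ℕ} (A : Finset (Fin n)) (a : Fin n) (c : ℕ) :
    ∑ u : {x // x ∈ A}, (if (u : Fin n) = a then c else 0) ≤ c := by
  classical
  by_cases ha : a ∈ A
  · rw [Finset.sum_eq_single (⟨a, ha⟩ : {x // x ∈ A})]
    · simp
    · intro u _ hu
      exact if_neg (fun he => hu (Subtype.ext he))
    · intro hx
      exact absurd (Finset.mem_univ _) hx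
  · rw [Finset.sum_eq_zero]
    · omega
    · intro u _
      exact if_neg (fun he => ha (by rw [← he]; exact u.2))

lemma CMG_deg_le {n k : ℕ} (hn : 3 ≤ n) (v : Fin n) : ∑ u, (CMG n k).e v u ≤ 2 * k := by
  have hb : ∀ u : Fin n, (CMG n k).e v u ≤
      ((if u = (⟨(v.val + 1) % n, Nat.mod_lt _ (by omega)⟩ : Fin n) then k else 0) +
       (if u = (⟨(v.val + (n - 1)) % n, Nat.mod_lt _ (by omega)⟩ : Fin n) then k else 0)) := by
    intro u
    by_cases h0 : (CMG n k).e v u = 0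
    · rw [h0]; omega
    · rcases CMG_support hn h0 with h | h <;> rw [if_pos h] <;>
        have := CMG_e_le (n := n) (k := k) v u <;> omega
  calc ∑ u, (CMG n k).e v u ≤ _ := Finset.sum_le_sum (fun u _ => hb u)
    _ ≤ 2 * k := by
      rw [Finset.sum_add_distrib]
      simp [Finset.sum_ite_eq']
      omega

def rot (n : ℕ) (m : Fin n) (v : Fin n) : ℕ := (v.val + (n - 1 - m.val)) % n

lemma rot_lt {n : ℕ} (hn : 3 ≤ n) (m v : Fin n) : rot n m v < n := Nat.mod_lt _ (by omega)

lemma rot_inj {n : ℕ} (hn : 3 ≤ n) (m : Fin n) : Function.Injective (rot n m) := by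
  intro a b h
  unfold rot at h
  have h' : a.val ≡ b.val [MOD n] := Nat.ModEq.add_right_cancel' _ h
  exact Fin.ext (by rw [Nat.ModEq] at h'; rwa [Nat.mod_eq_of_lt a.isLt, Nat.mod_eq_of_lt b.isLt] at h')

lemma rot_m {n : ℕ} (hn : 3 ≤ n) (m : Fin n) : rot n m m = n - 1 := by
  unfold rot
  have h1 : m.val + (n - 1 - m.val) = n - 1 := by have := m.isLt; omega
  rw [h1, Nat.mod_eq_of_lt (by omega)]

lemma rot_succ {n : ℕ} (hn : 3 ≤ n) (m : Fin n) (v : Fin n) (hv : v ≠ m) :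
    rot n m (⟨(v.val + 1) % n, Nat.mod_lt _ (by omega)⟩ : Fin n) = rot n m v + 1 := by
  have hne : rot n m v ≠ n - 1 := by
    intro h
    exact hv (rot_inj hn m (h.trans (rot_m hn m).symm))
  have hlt : rot n m v + 1 < n := by have := rot_lt hn m v; omega
  show ((v.val + 1) % n + (n - 1 - m.val)) % n = _
  rw [Nat.mod_add_mod]
  have he : v.val + 1 + (n - 1 - m.val) = (v.val + (n - 1 - m.val)) + 1 := by omega
  rw [he, Nat.add_mod, Nat.mod_eq_of_lt (show 1 < n by omega)]
  exact Nat.mod_eq_of_lt hlt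

open Multigraph in
lemma CMG_colorable {n k : ℕ} (hn : 3 ≤ n) {C : Type} (cov : Cover (CMG n k) C)
    (hL : ∀ v, 2 * k + 1 ≤ (cov.L v).card) : cov.Colorable := by
  apply Multigraph.greedy cov (fun v => v.val) (fun a b h => Fin.ext h)
  intro v
  calc ∑ u ∈ Finset.univ.filter (fun u : Fin n => u.val < v.val), (CMG n k).e v u
      ≤ ∑ u, (CMG n k).e v u := Finset.sum_le_sum_of_subset (Finset.filter_subset _ _)
    _ ≤ 2 * k := CMG_deg_le hn v
    _ < (cov.L v).card := hL v

lemma succ_pred {n : ℕ} (hn : 3 ≤ n) (v : Fin n) :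
    (⟨((⟨(v.val + (n - 1)) % n, Nat.mod_lt _ (by omega)⟩ : Fin n).val + 1) % n,
      Nat.mod_lt _ (by omega)⟩ : Fin n) = v := by
  apply Fin.ext
  show ((v.val + (n - 1)) % n + 1) % n = v.val
  rw [Nat.mod_add_mod]
  have he : v.val + (n - 1) + 1 = v.val + n := by omega
  rw [he, Nat.add_mod_right, Nat.mod_eq_of_lt v.isLt]

lemma sub_sum_le_k {n k : ℕ} (hn : 3 ≤ n) {A : Finset (Fin n)}
    (e' : Fin n → Fin n → ℕ) (hle : ∀ u v, e' u v ≤ (CMG n k).e u v)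
    (m : Fin n) (v : {x // x ∈ A}) (hvm : (v : Fin n) ≠ m) :
    ∑ u ∈ Finset.univ.filter (fun u : {x // x ∈ A} => rot n m ↑u < rot n m ↑v),
      e' ↑v ↑u ≤ k := by
  classical
  have hb : ∀ u ∈ Finset.univ.filter (fun u : {x // x ∈ A} => rot n m ↑u < rot n m ↑v),
      e' ↑v ↑u ≤ (if (u : Fin n) =
        (⟨((v : Fin n).val + (n - 1)) % n, Nat.mod_lt _ (by omega)⟩ : Fin n) then k else 0) := by
    intro u hu
    rw [Finset.mem_filter] at hu
    by_cases h0 : e' ↑v ↑u = 0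
    · rw [h0]; exact Nat.zero_le _
    · have he0 : (CMG n k).e ↑v ↑u ≠ 0 := by
        intro hc
        have := hle (↑v : Fin n) ↑u
        omega
      rcases CMG_support hn he0 with h | h
      · exfalso
        have h2 : rot n m ↑u = rot n m ↑v + 1 := by
          rw [h]; exact rot_succ hn m ↑v hvm
        omega
      · rw [if_pos h]
        exact le_trans (hle _ _) (CMG_e_le _ _)
  calc ∑ u ∈ Finset.univ.filter (fun u : {x // x ∈ A} => rot n m ↑u < rot n m ↑v), e' ↑v ↑u
      ≤ ∑ u ∈ Finset.univ.filter (fun u : {x // x ∈ A} => rot n m ↑u < rot n m ↑v),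
        (if (u : Fin n) =
          (⟨((v : Fin n).val + (n - 1)) % n, Nat.mod_lt _ (by omega)⟩ : Fin n) then k else 0) :=
      Finset.sum_le_sum hb
    _ ≤ ∑ u : {x // x ∈ A}, (if (u : Fin n) =
          (⟨((v : Fin n).val + (n - 1)) % n, Nat.mod_lt _ (by omega)⟩ : Fin n) then k else 0) := by
      refine Finset.sum_le_sum_of_subset (Finset.filter_subset _ _)
    _ ≤ k := sum_ite_coe_le A _ k

open Multigraph in
lemma sub_colorable {n k : ℕ} (hn : 3 ≤ n) (hk : 1 ≤ k) (A : Finset (Fin n))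
    (e' : Fin n → Fin n → ℕ) (hsymm : ∀ u v, e' u v = e' v u)
    (hle : ∀ u v, e' u v ≤ (CMG n k).e u v)
    (hnotall : ¬(A = Finset.univ ∧ e' = (CMG n k).e))
    {C : Type} (cov : Cover (Multigraph.subMG (CMG n k) A e' hsymm hle) C)
    (hL : ∀ v, 2 * k ≤ (cov.L v).card) : cov.Colorable := by
  classical
  by_cases hA : A = Finset.univ
  · have hex : ∃ u v, e' u v ≠ (CMG n k).e u v := by
      by_contra hc
      push_neg at hc
      exact hnotall ⟨hA, funext fun u => funext fun v => hc u v⟩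
    obtain ⟨u0, v0, huv⟩ := hex
    have hlt : e' u0 v0 < (CMG n k).e u0 v0 := lt_of_le_of_ne (hle _ _) huv
    have he0 : (CMG n k).e u0 v0 ≠ 0 := by omega
    have hek : (CMG n k).e u0 v0 ≤ k := CMG_e_le _ _
    -- find m with e' m (succ m) ≤ k - 1
    have hm : ∃ m : Fin n, e' m (⟨(m.val + 1) % n, Nat.mod_lt _ (by omega)⟩ : Fin n) ≤ k - 1 := by
      rcases CMG_support hn he0 with h | h
      · exact ⟨u0, by rw [← h]; omega⟩
      · refine ⟨v0, ?_⟩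
        have h2 : (⟨(v0.val + 1) % n, Nat.mod_lt _ (by omega)⟩ : Fin n) = u0 := by
          rw [h]; exact succ_pred hn u0
        rw [h2, hsymm]
        omega
    obtain ⟨m, hm⟩ := hm
    apply Multigraph.greedy cov (fun v => rot n m ↑v)
        (fun a b h => Subtype.ext (rot_inj hn m h))
    intro v
    have hEq : ∀ u : {x // x ∈ A}, ((CMG n k).subMG A e' hsymm hle).e v u = e' ↑v ↑u :=
      fun u => rfl
    simp only [hEq]
    by_cases hvm : (v : Fin n) = m
    · -- bound 2k - 1
      have hb : ∀ u : {x // x ∈ A}, e' ↑v ↑u ≤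
          ((if (u : Fin n) =
            (⟨((v : Fin n).val + (n - 1)) % n, Nat.mod_lt _ (by omega)⟩ : Fin n) then k else 0) +
           (if (u : Fin n) =
            (⟨((v : Fin n).val + 1) % n, Nat.mod_lt _ (by omega)⟩ : Fin n) then k - 1 else 0)) := by
        intro u
        by_cases h0 : e' ↑v ↑u = 0
        · rw [h0]; exact Nat.zero_le _
        · have he0' : (CMG n k).e ↑v ↑u ≠ 0 := by
            intro hc
            have := hle (↑v : Fin n) ↑u
            omega
          by_cases hp : (u : Fin n) =
              (⟨((v : Fin n).val + (n - 1)) % n, Nat.mod_lt _ (by omega)⟩ : Fin n)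
          · rw [if_pos hp]
            have := le_trans (hle (↑v : Fin n) ↑u) (CMG_e_le _ _)
            omega
          · rcases CMG_support hn he0' with h | h
            · rw [if_neg hp, if_pos h]
              have := hm
              rw [← hvm] at this
              rw [h]
              omega
            · exact absurd h hp
      have hsum : ∑ u ∈ Finset.univ.filter
            (fun u : {x // x ∈ A} => rot n m ↑u < rot n m ↑v),
            e' ↑v ↑u ≤ 2 * k - 1 := by
        calc ∑ u ∈ Finset.univ.filter (fun u : {x // x ∈ A} => rot n m ↑u < rot n m ↑v), e' ↑v ↑u
            ≤ ∑ u : {x // x ∈ A}, e' ↑v ↑u :=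
            Finset.sum_le_sum_of_subset (Finset.filter_subset _ _)
          _ ≤ ∑ u : {x // x ∈ A},
              ((if (u : Fin n) =
                (⟨((v : Fin n).val + (n - 1)) % n, Nat.mod_lt _ (by omega)⟩ : Fin n) then k else 0) +
               (if (u : Fin n) =
                (⟨((v : Fin n).val + 1) % n, Nat.mod_lt _ (by omega)⟩ : Fin n) then k - 1 else 0)) :=
            Finset.sum_le_sum (fun u _ => hb u)
          _ ≤ k + (k - 1) := by
            rw [Finset.sum_add_distrib]
            exact Nat.add_le_add (sum_ite_coe_le A _ k) (sum_ite_coe_le A _ (k - 1))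
          _ ≤ 2 * k - 1 := by omega
      have := hL v
      omega
    · have := sub_sum_le_k hn e' hle m v hvm
      have := hL v
      omega
  · have hm : ∃ m : Fin n, m ∉ A := by
      by_contra hc
      push_neg at hc
      exact hA (Finset.eq_univ_iff_forall.mpr hc)
    obtain ⟨m, hm⟩ := hm
    apply Multigraph.greedy cov (fun v => rot n m ↑v)
        (fun a b h => Subtype.ext (rot_inj hn m h))
    intro v
    have hEq : ∀ u : {x // x ∈ A}, ((CMG n k).subMG A e' hsymm hle).e v u = e' ↑v ↑u :=
      fun u => rfl
    simp only [hEq]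
    have hvm : (v : Fin n) ≠ m := fun hc => hm (hc ▸ v.2)
    have := sub_sum_le_k hn e' hle m v hvm
    have := hL v
    omega

lemma card_filter_le_all {α : Type} (s : Finset α) (p : α → Prop) (inst : DecidablePred p)
    (h : ∀ x ∈ s, ¬ p x) (c : ℕ) : (@Finset.filter α p inst s).card ≤ c := by
  have hemp : @Finset.filter α p inst s = ∅ := by
    rw [Finset.eq_empty_iff_forall_notMem]
    intro x hx
    simp only [Finset.mem_filter] at hx
    exact h x hx.1 hx.2
  rw [hemp]
  simp

def sde (k : ℕ) (a : Fin (2 * k)) : ZMod 2 := if a.val < k then 0 else 1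

def tw (n : ℕ) (i j : Fin n) : ZMod 2 :=
  if (i.val = 0 ∧ j.val = n - 1) ∨ (j.val = 0 ∧ i.val = n - 1) then ((n + 1 : ℕ) : ZMod 2) else 0

lemma tw_symm (n : ℕ) (i j : Fin n) : tw n i j = tw n j i := if_congr or_comm rfl rfl

lemma sde_card_le {k : ℕ} (c : ZMod 2) :
    (Finset.univ.filter (fun b : Fin (2 * k) => sde k b = c)).card ≤ k := by
  classical
  by_cases hc0 : c = 0
  · have : ∀ b : Fin (2 * k), sde k b = c → b.val < k := by
      intro b hb
      by_contra hge
      rw [sde, if_neg hge, hc0] at hb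
      exact one_ne_zero hb
    calc _ ≤ (Finset.range k).card := by
          refine Finset.card_le_card_of_injOn (fun b => b.val) ?_ ?_
          · intro b hb
            rw [Finset.mem_coe, Finset.mem_filter] at hb
            exact Finset.mem_range.mpr (this b hb.2)
          · intro a _ b _ h
            exact Fin.ext h
      _ = k := Finset.card_range k
  · by_cases hc1 : c = 1
    · have : ∀ b : Fin (2 * k), sde k b = c → k ≤ b.val := by
        intro b hb
        by_contra hge
        push_neg at hge
        rw [sde, if_pos hge, hc1] at hb
        exact one_ne_zero hb.symm
      calc _ ≤ (Finset.range k).card := by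
            refine Finset.card_le_card_of_injOn (fun b => b.val - k) ?_ ?_
            · intro b hb
              rw [Finset.mem_coe, Finset.mem_filter] at hb
              have h1 := this b hb.2
              have h2 := b.isLt
              have h3 : (fun b : Fin (2 * k) => b.val - k) b = b.val - k := rfl
              rw [h3]
              exact Finset.mem_range.mpr (by omega)
            · intro a ha b hb h
              rw [Finset.mem_coe, Finset.mem_filter] at ha hb
              have h1 := this a ha.2
              have h2 := this b hb.2
              have h3 : a.val - k = b.val - k := h
              exact Fin.ext (by omega)
        _ = k := Finset.card_range k
    · have : (Finset.univ.filter (fun b : Fin (2 * k) => sde k b = c)) = ∅ := by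
        rw [Finset.filter_eq_empty_iff]
        intro b _ hb
        rw [sde] at hb
        split at hb
        · exact hc0 hb.symm
        · exact hc1 hb.symm
      rw [this]
      simp

lemma CMG_e_of_adj {n k : ℕ} {u v : Fin n} (h : (CMG n k).Adj u v) : (CMG n k).e u v = k := by
  have h2 := h.2
  by_cases hc : u ≠ v ∧ ((u.val + 1) % n = v.val ∨ (v.val + 1) % n = u.val)
  · exact if_pos hc
  · have : (CMG n k).e u v = 0 := if_neg hc
    omega

open Multigraph in
noncomputable def badCover (n k : ℕ) : Cover (CMG n k) (Fin n × Fin (2 * k)) where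
  L i := {i} ×ˢ Finset.univ
  HAdj x y := (x.1 = y.1 ∧ x.2 ≠ y.2) ∨
    ((CMG n k).Adj x.1 y.1 ∧ sde k x.2 + sde k y.2 = tw n x.1 y.1)
  Hsymm x y h := by
    rcases h with ⟨h1, h2⟩ | ⟨h1, h2⟩
    · exact Or.inl ⟨h1.symm, h2.symm⟩
    · refine Or.inr ⟨⟨Ne.symm h1.1, by rw [(CMG n k).symm]; exact h1.2⟩, ?_⟩
      rw [add_comm, ← tw_symm]
      exact h2
  Hirrefl x h := by
    rcases h with ⟨_, h2⟩ | ⟨h1, _⟩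
    · exact h2 rfl
    · exact h1.1 rfl
  disjoint u v huv := by
    rw [Finset.disjoint_left]
    intro a ha hb
    rw [Finset.mem_product, Finset.mem_singleton] at ha hb
    exact huv (ha.1 ▸ hb.1)
  cliques v x hx y hy hxy := by
    rw [Finset.mem_product, Finset.mem_singleton] at hx hy
    refine Or.inl ⟨hx.1.trans hy.1.symm, fun h2 => hxy (Prod.ext (hx.1.trans hy.1.symm) h2)⟩
  edges_within x y h := by
    rcases h with ⟨h1, _⟩ | ⟨h1, _⟩
    · exact ⟨x.1, x.1, Finset.mem_product.mpr ⟨Finset.mem_singleton_self _, Finset.mem_univ _⟩,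
        Finset.mem_product.mpr ⟨Finset.mem_singleton.mpr h1.symm, Finset.mem_univ _⟩, Or.inl rfl⟩
    · exact ⟨x.1, y.1, Finset.mem_product.mpr ⟨Finset.mem_singleton_self _, Finset.mem_univ _⟩,
        Finset.mem_product.mpr ⟨Finset.mem_singleton_self _, Finset.mem_univ _⟩, Or.inr h1⟩
  matching u v huv x hx := by
    have hx1 : x.1 = u := Finset.mem_singleton.mp (Finset.mem_product.mp hx).1
    by_cases hadj : (CMG n k).Adj u v
    · rw [CMG_e_of_adj hadj]
      refine le_trans (Finset.card_le_card_of_injOn (fun y => y.2) ?_ ?_)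
        (sde_card_le (k := k) (tw n u v + sde k x.2))
      · intro y hy
        simp only [Finset.mem_coe, Finset.mem_filter, Finset.mem_product, Finset.mem_singleton] at hy
        have hy1 : y.1 = v := hy.1.1
        rcases hy.2 with ⟨ha, _⟩ | ⟨_, hb⟩
        · exact absurd (hx1.symm.trans (ha.trans hy1)) huv
        · refine Finset.mem_filter.mpr ⟨Finset.mem_univ _, ?_⟩
          rw [hx1, hy1] at hb
          have hzz : ∀ a b t : ZMod 2, a + b = t → b = t + a := by decide
          exact hzz _ _ _ hb
      · intro y1 hy1 y2 hy2 h
        simp only [Finset.mem_coe, Finset.mem_filter, Finset.mem_product,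
          Finset.mem_singleton] at hy1 hy2
        exact Prod.ext (hy1.1.1.trans hy2.1.1.symm) h
    · refine card_filter_le_all _ _ _ ?_ _
      intro y hy
      have hy1 : y.1 = v := Finset.mem_singleton.mp (Finset.mem_product.mp hy).1
      rintro (⟨h1, _⟩ | ⟨h1, _⟩)
      · exact huv (hx1.symm.trans (h1.trans hy1))
      · rw [hx1, hy1] at h1
        exact hadj h1

open Multigraph in
lemma badCover_not_colorable (n k : ℕ) (hn : 3 ≤ n) (hk : 1 ≤ k) :
    ¬ (badCover n k).Colorable := by
  rintro ⟨I, hmem, hind, hcard⟩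
  choose c hc using fun i => Finset.card_eq_one.mp (hcard i)
  have hcI : ∀ i, c i ∈ I ∧ (c i).1 = i := by
    intro i
    have h1 : c i ∈ ({c i} : Finset (Fin n × Fin (2 * k))) := Finset.mem_singleton_self _
    rw [← hc i] at h1
    simp only [Finset.mem_inter] at h1
    have h2 := h1.2
    rw [show (badCover n k).L i = {i} ×ˢ Finset.univ from rfl, Finset.mem_product,
      Finset.mem_singleton] at h2
    exact ⟨h1.1, h2.1⟩
  set f : Fin n → ZMod 2 := fun i => sde k (c i).2 with hf
  have hedge : ∀ i j : Fin n, (CMG n k).Adj i j → f i + f j ≠ tw n i j := by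
    intro i j hadj heq
    refine hind _ (hcI i).1 _ (hcI j).1 (Or.inr ⟨?_, ?_⟩)
    · rw [(hcI i).2, (hcI j).2]; exact hadj
    · rw [(hcI i).2, (hcI j).2]; exact heq
  have hadj1 : ∀ a : ℕ, (ha : a + 1 < n) →
      (CMG n k).Adj ⟨a, by omega⟩ ⟨a + 1, ha⟩ := by
    intro a ha
    refine ⟨Fin.ne_of_val_ne (show a ≠ a + 1 by omega), ?_⟩
    have he : (CMG n k).e ⟨a, by omega⟩ ⟨a + 1, ha⟩ = k := by
      refine if_pos ⟨Fin.ne_of_val_ne (show a ≠ a + 1 by omega), Or.inl ?_⟩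
      show (a + 1) % n = a + 1
      exact Nat.mod_eq_of_lt ha
    rw [he]
    exact hk
  have hstep : ∀ a : ℕ, (ha : a + 1 < n) → f ⟨a + 1, ha⟩ = f ⟨a, by omega⟩ + 1 := by
    intro a ha
    have h1 := hedge _ _ (hadj1 a ha)
    have htw : tw n (⟨a, by omega⟩ : Fin n) ⟨a + 1, ha⟩ = 0 := by
      refine if_neg ?_
      rintro (⟨h1, h2⟩ | ⟨h1, h2⟩) <;> simp at h1 h2 <;> omega
    rw [htw] at h1
    have hzz : ∀ x y : ZMod 2, x + y ≠ 0 → y = x + 1 := by decide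
    exact hzz _ _ h1
  have hiter : ∀ a : ℕ, (ha : a < n) → f ⟨a, ha⟩ = f ⟨0, by omega⟩ + (a : ZMod 2) := by
    intro a
    induction a with
    | zero => intro ha; simp
    | succ a ih =>
      intro ha
      have h1 := hstep a ha
      rw [h1, ih (by omega)]
      push_cast
      ring
  have hlast : (CMG n k).Adj ⟨n - 1, by omega⟩ ⟨0, by omega⟩ := by
    refine ⟨Fin.ne_of_val_ne (show n - 1 ≠ 0 by omega), ?_⟩
    have he : (CMG n k).e (⟨n - 1, by omega⟩ : Fin n) ⟨0, by omega⟩ = k := by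
      refine if_pos ⟨Fin.ne_of_val_ne (show n - 1 ≠ 0 by omega), Or.inl ?_⟩
      show (n - 1 + 1) % n = 0
      rw [show n - 1 + 1 = n by omega, Nat.mod_self]
    rw [he]
    exact hk
  have h1 := hedge _ _ hlast
  have htw : tw n (⟨n - 1, by omega⟩ : Fin n) ⟨0, by omega⟩ = ((n + 1 : ℕ) : ZMod 2) := by
    refine if_pos (Or.inr ⟨rfl, rfl⟩)
  rw [htw, hiter (n - 1) (by omega)] at h1
  have hcast : ((n - 1 : ℕ) : ZMod 2) = ((n + 1 : ℕ) : ZMod 2) := by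
    rw [show n + 1 = (n - 1) + 2 by omega, Nat.cast_add]
    have h2 : ((2 : ℕ) : ZMod 2) = 0 := by decide
    rw [h2, add_zero]
  rw [hcast] at h1
  have hzz : ∀ x y : ZMod 2, (x + y) + x ≠ y → False := by decide
  exact hzz _ _ h1

open Multigraph in
/-- For `n ≥ 3` and `k ≥ 1`, the multigraph `C_n^k` is DP-`(2k+1)`-critical:
`χ_DP(C_n^k) = 2k+1` and every proper sub-multigraph has smaller DP-chromatic number. -/
theorem statement19 (n k : ℕ) (hn : 3 ≤ n) (hk : 1 ≤ k) :
    DPCritical (CMG n k) (2 * k + 1) := by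
  have hmem : ∀ (C : Type) (cov : Cover (CMG n k) C),
      (∀ v, 2 * k + 1 ≤ (cov.L v).card) → cov.Colorable :=
    fun C cov hL => CMG_colorable hn cov hL
  constructor
  · unfold Multigraph.DPChromatic
    apply le_antisymm
    · exact Nat.sInf_le hmem
    · by_contra hlt
      push_neg at hlt
      have hne : {m | ∀ (C : Type) (cov : Cover (CMG n k) C),
          (∀ v, m ≤ (cov.L v).card) → cov.Colorable}.Nonempty := ⟨2 * k + 1, hmem⟩
      have hin := Nat.sInf_mem hne
      refine badCover_not_colorable n k hn hk (hin (Fin n × Fin (2 * k)) (badCover n k) ?_)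
      intro v
      have hcardL : ((badCover n k).L v).card = 2 * k := by
        show (({v} ×ˢ Finset.univ : Finset (Fin n × Fin (2 * k)))).card = 2 * k
        rw [Finset.card_product]
        simp
      rw [hcardL]
      omega
  · intro A e' hsymm hle hsupp hnotall
    have h1 : Multigraph.DPChromatic (Multigraph.subMG (CMG n k) A e' hsymm hle) ≤ 2 * k := by
      unfold Multigraph.DPChromatic
      exact Nat.sInf_le (fun C cov hL => sub_colorable hn hk A e' hsymm hle hnotall cov hL)
    omega
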